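/- arXiv:math/0005028 — 3 statements merged into one kernel-verified Lean document; each statement's English description precedes it below -/
import Mathlib

section
/- If f ∈ ℤ[x] is a polynomial of degree D whose coefficients all have absolute value at most c, and g ∈ ℤ[x] divides f in ℤ[x], then every coefficient of g has absolute value at most √(D+1) · 2^D · c. -/
open Polynomial Finset

noncomputable section MignotteAux

/-- Sum of squared moduli of the first `N` coefficients. -/
def mgSq2 (p : Polynomial ℂ) (N : ℕ) : ℝ :=
  ∑ i ∈ Finset.range N, Complex.normSq (p.coeff i)

lemma mgSq2_nonneg (p : Polynomial ℂ) (N : ℕ) : 0 ≤ mgSq2 p N :=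
  Finset.sum_nonneg fun _ _ => Complex.normSq_nonneg _

lemma mg_pointwise (α x y : ℂ) :
    Complex.normSq (x - α * y) - Complex.normSq ((starRingEnd ℂ) α * x - y)
      = (1 - Complex.normSq α) * (Complex.normSq x - Complex.normSq y) := by
  simp [Complex.normSq_apply, Complex.mul_re, Complex.mul_im, Complex.sub_re,
    Complex.sub_im, Complex.conj_re, Complex.conj_im]
  ring

lemma mg_swap (α : ℂ) (p : Polynomial ℂ) (M : ℕ) (hp : p.coeff M = 0) :
    mgSq2 ((X - C α) * p) (M + 1) = mgSq2 ((C ((starRingEnd ℂ) α) * X - 1) * p) (M + 1) := by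
  have h1 : ∀ i, ((X - C α) * p).coeff i = (X * p).coeff i - α * p.coeff i := by
    intro i; rw [sub_mul, coeff_sub, coeff_C_mul]
  have h2 : ∀ i, ((C ((starRingEnd ℂ) α) * X - 1) * p).coeff i
      = (starRingEnd ℂ) α * (X * p).coeff i - p.coeff i := by
    intro i; rw [sub_mul, one_mul, mul_assoc, coeff_sub, coeff_C_mul]
  have hXp : ∑ i ∈ Finset.range (M + 1), Complex.normSq ((X * p).coeff i)
      = ∑ i ∈ Finset.range (M + 1), Complex.normSq (p.coeff i) := by
    rw [Finset.sum_range_succ']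
    rw [Finset.sum_range_succ]
    simp [coeff_X_mul, hp]
  have : mgSq2 ((X - C α) * p) (M + 1) - mgSq2 ((C ((starRingEnd ℂ) α) * X - 1) * p) (M + 1) = 0 := by
    unfold mgSq2
    rw [← Finset.sum_sub_distrib]
    have : ∀ i ∈ Finset.range (M + 1),
        Complex.normSq (((X - C α) * p).coeff i)
          - Complex.normSq (((C ((starRingEnd ℂ) α) * X - 1) * p).coeff i)
        = (1 - Complex.normSq α) * (Complex.normSq ((X * p).coeff i) - Complex.normSq (p.coeff i)) := by
      intro i _
      rw [h1 i, h2 i, mg_pointwise]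
    rw [Finset.sum_congr rfl this, ← Finset.mul_sum, Finset.sum_sub_distrib, hXp, sub_self,
      mul_zero]
  linarith


/-- Flip factor: replace `X - α` by `ᾱX - 1` when `|α| > 1`. -/
def mgFl (α : ℂ) : Polynomial ℂ :=
  if 1 < Complex.normSq α then C ((starRingEnd ℂ) α) * X - 1 else X - C α

/-- Top coefficient of the flipped factor. -/
def mgFlLead (α : ℂ) : ℂ := if 1 < Complex.normSq α then (starRingEnd ℂ) α else 1

def mgOrig (s : Multiset ℂ) : Polynomial ℂ := (s.map fun α => X - C α).prod
def mgFlip (s : Multiset ℂ) : Polynomial ℂ := (s.map mgFl).prod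

lemma mgOrig_cons (α : ℂ) (t : Multiset ℂ) :
    mgOrig (α ::ₘ t) = (X - C α) * mgOrig t := by
  simp [mgOrig, Multiset.map_cons, Multiset.prod_cons]

lemma mgFlip_cons (α : ℂ) (t : Multiset ℂ) :
    mgFlip (α ::ₘ t) = mgFl α * mgFlip t := by
  simp [mgFlip, Multiset.map_cons, Multiset.prod_cons]

lemma natDegree_mgFl_le (α : ℂ) : (mgFl α).natDegree ≤ 1 := by
  unfold mgFl
  split
  · refine (natDegree_sub_le _ _).trans (max_le ?_ ?_)
    · exact (natDegree_C_mul_le _ _).trans (by simp)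
    · simp
  · exact (natDegree_sub_le _ _).trans (by simp)

lemma natDegree_mgFlip_le (s : Multiset ℂ) : (mgFlip s).natDegree ≤ Multiset.card s := by
  refine (Polynomial.natDegree_multiset_prod_le _).trans ?_
  rw [Multiset.map_map]
  calc (Multiset.map (Polynomial.natDegree ∘ mgFl) s).sum
      ≤ (Multiset.map (fun _ => 1) s).sum := by
        apply Multiset.sum_map_le_sum_map
        intro α _; exact natDegree_mgFl_le α
    _ = Multiset.card s := by simp
lemma mg_flip_eq (s : Multiset ℂ) : ∀ (h : Polynomial ℂ) (M : ℕ),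
    h.natDegree + Multiset.card s < M →
    mgSq2 (h * mgOrig s) (M + 1) = mgSq2 (h * mgFlip s) (M + 1) := by
  induction s using Multiset.induction with
  | empty => intro h M _; simp [mgOrig, mgFlip]
  | cons α t ih =>
    intro h M hM
    rw [mgOrig_cons, mgFlip_cons]
    have hcard : Multiset.card (α ::ₘ t) = Multiset.card t + 1 := by simp
    have h1 : (h * (X - C α)).natDegree + Multiset.card t < M := by
      have := Polynomial.natDegree_mul_le (p := h) (q := X - C α)
      have h2 : (X - C α).natDegree ≤ 1 := (natDegree_sub_le _ _).trans (by simp)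
      omega
    have e1 : h * ((X - C α) * mgOrig t) = (h * (X - C α)) * mgOrig t := by ring
    have e2 : (h * (X - C α)) * mgFlip t = (X - C α) * (h * mgFlip t) := by ring
    rw [e1, ih (h * (X - C α)) M h1, e2]
    by_cases hα : 1 < Complex.normSq α
    · have hco : (h * mgFlip t).coeff M = 0 := by
        apply Polynomial.coeff_eq_zero_of_natDegree_lt
        have := Polynomial.natDegree_mul_le (p := h) (q := mgFlip t)
        have := natDegree_mgFlip_le t
        omega
      rw [mg_swap α (h * mgFlip t) M hco]
      have : mgFl α = C ((starRingEnd ℂ) α) * X - 1 := by simp [mgFl, hα]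
      rw [this]
      congr 1
      ring
    · have : mgFl α = X - C α := by simp [mgFl, hα]
      rw [this]
      congr 1
      ring

lemma mg_coeff_top (s : Multiset ℂ) :
    (mgFlip s).coeff (Multiset.card s) = (s.map mgFlLead).prod := by
  induction s using Multiset.induction with
  | empty => simp [mgFlip]
  | cons α t ih =>
    rw [mgFlip_cons]
    have hcard : Multiset.card (α ::ₘ t) = Multiset.card t + 1 := by simp
    rw [hcard]
    have hfl : mgFl α = C (mgFlLead α) * X + C (if 1 < Complex.normSq α then -1 else -α) := by
      unfold mgFl mgFlLead
      split <;> simp [sub_eq_add_neg]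
    rw [hfl, add_mul, coeff_add]
    have e1 : (C (mgFlLead α) * X * mgFlip t).coeff (Multiset.card t + 1)
        = mgFlLead α * (mgFlip t).coeff (Multiset.card t) := by
      rw [mul_assoc, coeff_C_mul, coeff_X_mul]
    have e2 : (C (if 1 < Complex.normSq α then -1 else -α) * mgFlip t).coeff (Multiset.card t + 1) = 0 := by
      rw [coeff_C_mul]
      have : (mgFlip t).coeff (Multiset.card t + 1) = 0 :=
        Polynomial.coeff_eq_zero_of_natDegree_lt (lt_of_le_of_lt (natDegree_mgFlip_le t) (by omega))
      rw [this, mul_zero]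
    rw [e1, e2, add_zero, ih]
    simp [Multiset.map_cons, Multiset.prod_cons]

set_option maxHeartbeats 1000000 in
lemma mg_coeff_orig_bound (s : Multiset ℂ) :
    ∀ i, ‖(mgOrig s).coeff i‖ ≤ (s.map fun α => 1 + ‖α‖).prod := by
  induction s using Multiset.induction with
  | empty =>
    intro i
    have h1 : (1 : ℝ) ≤ 1 := le_refl 1
    rcases Nat.eq_zero_or_pos i with h | h
    · subst h; simp [mgOrig]
    · simp [mgOrig, Polynomial.coeff_one, Nat.pos_iff_ne_zero.mp h]
  | cons α t ih =>
    have hprod_nonneg : 0 ≤ (t.map fun α => 1 + ‖α‖).prod := by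
      apply Multiset.prod_nonneg
      intro x hx
      obtain ⟨β, _, rfl⟩ := Multiset.mem_map.mp hx
      positivity
    intro i
    rw [mgOrig_cons, Multiset.map_cons, Multiset.prod_cons]
    have hco : ((X - C α) * mgOrig t).coeff i
        = (X * mgOrig t).coeff i - α * (mgOrig t).coeff i := by
      rw [sub_mul, coeff_sub, coeff_C_mul]
    rw [hco]
    have hb1 : ‖(X * mgOrig t).coeff i‖ ≤ (t.map fun α => 1 + ‖α‖).prod := by
      rcases Nat.eq_zero_or_pos i with h | h
      · subst h
        rw [Polynomial.mul_coeff_zero, Polynomial.coeff_X_zero, zero_mul, norm_zero]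
        exact hprod_nonneg
      · obtain ⟨j, rfl⟩ := Nat.exists_eq_add_of_lt h
        rw [show 0 + j + 1 = j + 1 by omega, coeff_X_mul]
        exact ih j
    apply le_trans (norm_sub_le _ _)
    rw [norm_mul]
    have h2 := mul_le_mul_of_nonneg_left (ih i) (norm_nonneg α)
    nlinarith [hb1, h2]

lemma mg_prod_nonneg_aux (s : Multiset ℂ) (F : ℂ → ℝ) (hF : ∀ x, 0 ≤ F x) :
    0 ≤ (s.map F).prod := by
  apply Multiset.prod_nonneg
  intro x hx
  obtain ⟨β, _, rfl⟩ := Multiset.mem_map.mp hx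
  exact hF β

lemma mg_one_le_prod_max (s : Multiset ℂ) :
    1 ≤ (s.map fun α => max 1 ‖α‖).prod := by
  apply Multiset.one_le_prod
  intro x hx
  obtain ⟨β, _, rfl⟩ := Multiset.mem_map.mp hx
  exact le_max_left _ _

lemma mg_prod_one_add_le (s : Multiset ℂ) :
    (s.map fun α => 1 + ‖α‖).prod
      ≤ 2 ^ Multiset.card s * (s.map fun α => max 1 ‖α‖).prod := by
  induction s using Multiset.induction with
  | empty => simp
  | cons α t ih =>
    rw [Multiset.map_cons, Multiset.prod_cons, Multiset.map_cons, Multiset.prod_cons]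
    have hcard : Multiset.card (α ::ₘ t) = Multiset.card t + 1 := by simp
    rw [hcard]
    have h1 : 1 + ‖α‖ ≤ 2 * max 1 ‖α‖ := by
      rcases le_total (‖α‖) 1 with h | h
      · have : max 1 ‖α‖ = 1 := max_eq_left h
        rw [this]; linarith
      · have : max 1 ‖α‖ = ‖α‖ := max_eq_right h
        rw [this]; linarith
    have h2 : (0:ℝ) ≤ (t.map fun α => 1 + ‖α‖).prod :=
      mg_prod_nonneg_aux t _ (fun x => by positivity)
    have h3 : (0:ℝ) ≤ 2 * max 1 ‖α‖ := by positivity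
    calc (1 + ‖α‖) * (t.map fun α => 1 + ‖α‖).prod
        ≤ (2 * max 1 ‖α‖) * (2 ^ Multiset.card t * (t.map fun α => max 1 ‖α‖).prod) :=
          mul_le_mul h1 ih h2 h3
      _ = 2 ^ (Multiset.card t + 1) * (max 1 ‖α‖ * (t.map fun α => max 1 ‖α‖).prod) := by
          ring

lemma mg_landau (a : ℂ) (s : Multiset ℂ) (M : ℕ) (hM : Multiset.card s < M) :
    Complex.normSq a * (s.map fun α => max 1 (Complex.normSq α)).prod
      ≤ mgSq2 (C a * mgOrig s) (M + 1) := by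
  have hflip := mg_flip_eq s (C a) M (by simpa using hM)
  rw [hflip]
  have hco : (C a * mgFlip s).coeff (Multiset.card s) = a * (s.map mgFlLead).prod := by
    rw [coeff_C_mul, mg_coeff_top]
  have hns : Complex.normSq ((C a * mgFlip s).coeff (Multiset.card s))
      = Complex.normSq a * (s.map fun α => max 1 (Complex.normSq α)).prod := by
    rw [hco, map_mul]
    congr 1
    rw [map_multiset_prod (Complex.normSq : ℂ →*₀ ℝ), Multiset.map_map]
    apply congrArg Multiset.prod
    apply Multiset.map_congr rfl
    intro α _
    by_cases h : 1 < Complex.normSq α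
    · simp only [Function.comp_apply, mgFlLead, if_pos h, Complex.normSq_conj]
      exact (max_eq_right h.le).symm
    · simp only [Function.comp_apply, mgFlLead, if_neg h]
      rw [max_eq_left (le_of_not_gt h)]
      exact Complex.normSq_one
  rw [← hns]
  unfold mgSq2
  exact Finset.single_le_sum (f := fun i => Complex.normSq ((C a * mgFlip s).coeff i))
    (fun i _ => Complex.normSq_nonneg _)
    (Finset.mem_range.mpr (by omega))

lemma mg_max_sq (α : ℂ) : (max 1 ‖α‖) ^ 2 = max 1 (Complex.normSq α) := by
  have h : Complex.normSq α = ‖α‖ ^ 2 := by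
    rw [← Complex.sq_norm]
  rcases le_total ‖α‖ 1 with h1 | h1
  · rw [max_eq_left h1, max_eq_left]
    · norm_num
    · rw [h]; nlinarith [norm_nonneg α]
  · rw [max_eq_right h1, max_eq_right, h]
    rw [h]; nlinarith

end MignotteAux

set_option maxHeartbeats 1600000 in
/-- Mignotte's factor bound. -/
theorem mignotte_divisor_bound (f g : Polynomial ℤ) (D : ℕ) (c : ℝ)
    (hf : f ≠ 0) (hD : f.natDegree = D)
    (hc : ∀ i, (|f.coeff i| : ℝ) ≤ c)
    (hdvd : g ∣ f) :
    ∀ i, (|g.coeff i| : ℝ) ≤ Real.sqrt (D + 1) * 2 ^ D * c := by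
  intro i
  have hc0 : 0 ≤ c := le_trans (by positivity) (hc 0)
  set φ := Int.castRingHom ℂ with hφdef
  have hφ : Function.Injective ⇑φ := Int.cast_injective
  set F := f.map φ with hFdef
  set G := g.map φ with hGdef
  have hg : g ≠ 0 := by rintro rfl; exact hf (zero_dvd_iff.mp hdvd)
  have hF0 : F ≠ 0 := (Polynomial.map_ne_zero_iff hφ).mpr hf
  have hG0 : G ≠ 0 := (Polynomial.map_ne_zero_iff hφ).mpr hg
  have hFdeg : F.natDegree = D := by
    rw [hFdef, Polynomial.natDegree_map_eq_of_injective hφ, hD]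
  have hGdeg : G.natDegree ≤ D := by
    rw [hGdef, Polynomial.natDegree_map_eq_of_injective hφ]
    exact hD ▸ Polynomial.natDegree_le_of_dvd hdvd hf
  have hFs : Polynomial.Splits F := IsAlgClosed.splits F
  have hGs : Polynomial.Splits G := IsAlgClosed.splits G
  have hcardF : Multiset.card F.roots = D := by
    rw [Polynomial.splits_iff_card_roots.mp hFs, hFdeg]
  have hcardG : Multiset.card G.roots = G.natDegree :=
    Polynomial.splits_iff_card_roots.mp hGs
  have hFeq : F = Polynomial.C F.leadingCoeff * mgOrig F.roots :=
    Polynomial.Splits.eq_prod_roots hFs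
  have hGeq : G = Polynomial.C G.leadingCoeff * mgOrig G.roots :=
    Polynomial.Splits.eq_prod_roots hGs
  -- leading coefficient comparison
  have hb : ‖G.leadingCoeff‖ ≤ ‖F.leadingCoeff‖ := by
    rw [hGdef, hFdef, Polynomial.leadingCoeff_map_of_injective hφ, Polynomial.leadingCoeff_map_of_injective hφ]
    obtain ⟨k, hk⟩ := hdvd
    have hfl : f.leadingCoeff ≠ 0 := Polynomial.leadingCoeff_ne_zero.mpr hf
    have habs : |g.leadingCoeff| ≤ |f.leadingCoeff| := by
      apply Int.le_of_dvd (abs_pos.mpr hfl)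
      apply (abs_dvd _ _).mpr
      apply (dvd_abs _ _).mpr
      exact ⟨k.leadingCoeff, by rw [hk, Polynomial.leadingCoeff_mul]⟩
    have e1 : ‖(φ g.leadingCoeff : ℂ)‖ = ((|g.leadingCoeff| : ℤ) : ℝ) := by
      simp [hφdef, Complex.norm_intCast]
    have e2 : ‖(φ f.leadingCoeff : ℂ)‖ = ((|f.leadingCoeff| : ℤ) : ℝ) := by
      simp [hφdef, Complex.norm_intCast]
    rw [e1, e2]
    exact_mod_cast habs
  -- roots comparison
  have hroots : G.roots ≤ F.roots := Polynomial.roots.le_of_dvd hF0 (Polynomial.map_dvd φ hdvd)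
  obtain ⟨u, hu⟩ := Multiset.le_iff_exists_add.mp hroots
  set PG : ℝ := (G.roots.map fun α => max 1 ‖α‖).prod with hPGdef
  set PF : ℝ := (F.roots.map fun α => max 1 ‖α‖).prod with hPFdef
  set PU : ℝ := (u.map fun α => max 1 ‖α‖).prod with hPUdef
  have hPFsplit : PF = PG * PU := by
    rw [hPFdef, hPGdef, hPUdef, hu, Multiset.map_add, Multiset.prod_add]
  have hPG1 : (1:ℝ) ≤ PG := mg_one_le_prod_max _
  have hPU1 : (1:ℝ) ≤ PU := mg_one_le_prod_max _
  have hPF1 : (1:ℝ) ≤ PF := mg_one_le_prod_max _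
  -- coefficient bound for G
  have hcoG : ‖G.coeff i‖ ≤ ‖G.leadingCoeff‖ * (G.roots.map fun α => 1 + ‖α‖).prod := by
    conv_lhs => rw [hGeq]
    rw [Polynomial.coeff_C_mul, norm_mul]
    exact mul_le_mul_of_nonneg_left (mg_coeff_orig_bound _ i) (norm_nonneg _)
  -- Landau's inequality
  set Mah : ℝ := ‖F.leadingCoeff‖ * PF with hMahdef
  have hMah0 : 0 ≤ Mah := mul_nonneg (norm_nonneg _) (by linarith)
  have hL : Complex.normSq F.leadingCoeff *
      (F.roots.map fun α => max 1 (Complex.normSq α)).prod ≤ mgSq2 F (D + 2) := by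
    have h := mg_landau F.leadingCoeff F.roots (D + 1) (by omega)
    rw [← hFeq] at h
    exact h
  have hMahSq : Mah ^ 2 = Complex.normSq F.leadingCoeff *
      (F.roots.map fun α => max 1 (Complex.normSq α)).prod := by
    rw [hMahdef, mul_pow]
    congr 1
    · rw [← Complex.sq_norm]
    · rw [hPFdef, ← Multiset.prod_map_pow]
      apply congrArg Multiset.prod
      apply Multiset.map_congr rfl
      intro α _
      exact mg_max_sq α
  have hMahle : Mah ≤ Real.sqrt (mgSq2 F (D + 2)) := by
    rw [Real.le_sqrt hMah0 (mgSq2_nonneg _ _), hMahSq]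
    exact hL
  -- bounding the 2-norm of F
  have hsq2 : mgSq2 F (D + 2) ≤ (D + 1) * c ^ 2 := by
    unfold mgSq2
    rw [Finset.sum_range_succ]
    have htop : F.coeff (D + 1) = 0 :=
      Polynomial.coeff_eq_zero_of_natDegree_lt (by omega)
    rw [htop, map_zero, add_zero]
    calc ∑ j ∈ Finset.range (D + 1), Complex.normSq (F.coeff j)
        ≤ ∑ _j ∈ Finset.range (D + 1), c ^ 2 := by
          apply Finset.sum_le_sum
          intro j _
          have e : Complex.normSq (F.coeff j) = ((f.coeff j : ℝ)) ^ 2 := by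
            rw [hFdef, Polynomial.coeff_map]
            rw [show (φ (f.coeff j) : ℂ) = (((f.coeff j : ℝ)) : ℂ) by push_cast [hφdef]; rfl]
            rw [Complex.normSq_ofReal]; ring
          rw [e]
          have habs : |(f.coeff j : ℝ)| ≤ c := hc j
          nlinarith [abs_nonneg (f.coeff j : ℝ), le_abs_self (f.coeff j : ℝ),
            neg_abs_le (f.coeff j : ℝ)]
      _ = (D + 1) * c ^ 2 := by
          rw [Finset.sum_const, Finset.card_range, nsmul_eq_mul]
          push_cast; ring
  have hsqrt : Real.sqrt (mgSq2 F (D + 2)) ≤ Real.sqrt (D + 1) * c := by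
    calc Real.sqrt (mgSq2 F (D + 2)) ≤ Real.sqrt ((D + 1) * c ^ 2) := Real.sqrt_le_sqrt hsq2
      _ = Real.sqrt (D + 1) * c := by
          rw [Real.sqrt_mul (by positivity), Real.sqrt_sq hc0]
  -- assemble
  have hgi : (|g.coeff i| : ℝ) = ‖G.coeff i‖ := by
    rw [hGdef, Polynomial.coeff_map]
    simp [hφdef, Complex.norm_intCast]
  rw [hgi]
  have h2pow : (2:ℝ) ^ Multiset.card G.roots ≤ 2 ^ D := by
    apply pow_le_pow_right₀ (by norm_num)
    omega
  have h2nn : (0:ℝ) ≤ 2 ^ Multiset.card G.roots := by positivity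
  have hbnn : (0:ℝ) ≤ ‖G.leadingCoeff‖ := norm_nonneg _
  have hann : (0:ℝ) ≤ ‖F.leadingCoeff‖ := norm_nonneg _
  calc ‖G.coeff i‖ ≤ ‖G.leadingCoeff‖ * (G.roots.map fun α => 1 + ‖α‖).prod := hcoG
    _ ≤ ‖G.leadingCoeff‖ * (2 ^ Multiset.card G.roots * PG) :=
        mul_le_mul_of_nonneg_left (mg_prod_one_add_le _) hbnn
    _ ≤ (2:ℝ) ^ D * (‖F.leadingCoeff‖ * PF) := by
        rw [hPFsplit]
        have key : ‖G.leadingCoeff‖ * PG ≤ ‖F.leadingCoeff‖ * (PG * PU) := by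
          have k1 : ‖G.leadingCoeff‖ * PG ≤ ‖F.leadingCoeff‖ * PG :=
            mul_le_mul_of_nonneg_right hb (by linarith)
          have k2 : ‖F.leadingCoeff‖ * PG ≤ ‖F.leadingCoeff‖ * PG * PU :=
            le_mul_of_one_le_right (by nlinarith) hPU1
          rw [← mul_assoc]
          exact k1.trans k2
        nlinarith [mul_le_mul h2pow key (by nlinarith) (by positivity)]
    _ = (2:ℝ) ^ D * Mah := by rw [hMahdef]
    _ ≤ (2:ℝ) ^ D * (Real.sqrt (D + 1) * c) :=
        mul_le_mul_of_nonneg_left (hMahle.trans hsqrt) (by positivity)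
    _ = Real.sqrt (D + 1) * 2 ^ D * c := by ring
end

section
/- Let A and B be complex N×N matrices such that B has at most N' nonzero rows, every row of A has Euclidean norm at most v, and every row of B has Euclidean norm at most w. Then the coefficient of s^j in the polynomial det(A + s·B) ∈ ℂ[s] has absolute value at most C(N', j) · v^(N−j) · (v + w)^j. -/
open Matrix
open scoped ComplexOrder

lemma aux_trace_eq_sum_eigenvalues {n : ℕ} {P : Matrix (Fin n) (Fin n) ℂ}
    (hH : P.IsHermitian) : P.trace = ∑ i, (hH.eigenvalues i : ℂ) := by
  conv_lhs => rw [hH.spectral_theorem, Unitary.conjStarAlgAut_apply]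
  rw [Matrix.trace_mul_cycle,
    (Matrix.mem_unitaryGroup_iff').mp hH.eigenvectorUnitary.2, Matrix.one_mul,
    Matrix.trace_diagonal]
  rfl
lemma aux_norm_det_le_one {n : ℕ} (M : Matrix (Fin n) (Fin n) ℂ)
    (h : ∀ i, ∑ k, ‖M i k‖ ^ 2 = 1) : ‖M.det‖ ≤ 1 := by
  rcases Nat.eq_zero_or_pos n with hn | hn
  · subst hn; simp [Matrix.det_fin_zero]
  have hP : (M * Mᴴ).PosSemidef := Matrix.posSemidef_self_mul_conjTranspose M
  have hH := hP.1
  have hdet : (M * Mᴴ).det = ((‖M.det‖ ^ 2 : ℝ) : ℂ) := by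
    rw [Matrix.det_mul, Matrix.det_conjTranspose]
    rw [show star M.det = starRingEnd ℂ M.det from rfl, Complex.mul_conj]
    rw [Complex.normSq_eq_norm_sq]
  have htr : (M * Mᴴ).trace = (n : ℂ) := by
    have hrow : ∀ i, ∑ k, M i k * (starRingEnd ℂ) (M i k) = (1 : ℂ) := by
      intro i
      have : ∑ k, M i k * (starRingEnd ℂ) (M i k) = ((∑ k, ‖M i k‖ ^ 2 : ℝ) : ℂ) := by
        push_cast
        refine Finset.sum_congr rfl fun k _ => ?_
        rw [Complex.mul_conj, Complex.normSq_eq_norm_sq]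
        norm_num
      rw [this, h i, Complex.ofReal_one]
    simp only [Matrix.trace, Matrix.diag, Matrix.mul_apply, Matrix.conjTranspose_apply,
      show ∀ z : ℂ, star z = starRingEnd ℂ z from fun _ => rfl, hrow]
    simp
  -- eigenvalues
  have h1 : (‖M.det‖ ^ 2 : ℝ) = ∏ i, hH.eigenvalues i := by
    have h' := hH.det_eq_prod_eigenvalues
    rw [hdet] at h'
    have h'' : ((‖M.det‖ ^ 2 : ℝ) : ℂ) = ((∏ i, hH.eigenvalues i : ℝ) : ℂ) := by
      rw [h']; push_cast; rfl
    exact_mod_cast h''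
  have h2 : (∑ i, hH.eigenvalues i : ℝ) = n := by
    have := aux_trace_eq_sum_eigenvalues hH
    rw [htr] at this
    exact_mod_cast this.symm
  have hnn : ∀ i, 0 ≤ hH.eigenvalues i := fun i => hP.eigenvalues_nonneg i
  -- AM-GM
  have key : ∏ i, hH.eigenvalues i ≤ 1 := by
    have amgm := Real.geom_mean_le_arith_mean_weighted Finset.univ (fun _ => (n : ℝ)⁻¹) hH.eigenvalues
      (fun i _ => by positivity) (by simp [Finset.card_univ, mul_inv_cancel₀ (by positivity : (n:ℝ) ≠ 0)]) (fun i _ => hnn i)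
    have hrhs : ∑ i, (n : ℝ)⁻¹ * hH.eigenvalues i = 1 := by
      rw [← Finset.mul_sum, h2, inv_mul_cancel₀ (by positivity : (n:ℝ) ≠ 0)]
    rw [hrhs] at amgm
    have hpow : (∏ i, hH.eigenvalues i ^ ((n : ℝ)⁻¹)) ^ (n : ℕ) = ∏ i, hH.eigenvalues i := by
      rw [← Finset.prod_pow]
      refine Finset.prod_congr rfl fun i _ => ?_
      rw [← Real.rpow_natCast (hH.eigenvalues i ^ ((n:ℝ)⁻¹)) n, ← Real.rpow_mul (hnn i),
        inv_mul_cancel₀ (by positivity : (n:ℝ) ≠ 0), Real.rpow_one]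
    calc ∏ i, hH.eigenvalues i = (∏ i, hH.eigenvalues i ^ ((n : ℝ)⁻¹)) ^ (n : ℕ) := hpow.symm
      _ ≤ 1 ^ (n : ℕ) := pow_le_pow_left₀ (Finset.prod_nonneg fun i _ => Real.rpow_nonneg (hnn i) _) amgm n
      _ = 1 := one_pow n
  nlinarith [norm_nonneg M.det, h1, key]

lemma aux_hadamard {n : ℕ} (M : Matrix (Fin n) (Fin n) ℂ) :
    ‖M.det‖ ≤ ∏ i, Real.sqrt (∑ k, ‖M i k‖ ^ 2) := by
  by_cases hz : ∃ i, (∑ k, ‖M i k‖ ^ 2) = 0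
  · obtain ⟨i, hi⟩ := hz
    have hrow : ∀ k, M i k = 0 := by
      intro k
      have := (Finset.sum_eq_zero_iff_of_nonneg (fun k _ => sq_nonneg ‖M i k‖)).mp hi k
        (Finset.mem_univ k)
      have h0 : ‖M i k‖ = 0 := by
        nlinarith [norm_nonneg (M i k)]
      simpa using h0
    rw [Matrix.det_eq_zero_of_row_eq_zero i hrow, norm_zero]
    exact Finset.prod_nonneg fun i _ => Real.sqrt_nonneg _
  push_neg at hz
  have hrpos : ∀ i, 0 < Real.sqrt (∑ k, ‖M i k‖ ^ 2) := by
    intro i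
    refine Real.sqrt_pos.mpr ?_
    exact lt_of_le_of_ne (Finset.sum_nonneg fun k _ => sq_nonneg _) (Ne.symm (hz i))
  set r : Fin n → ℝ := fun i => Real.sqrt (∑ k, ‖M i k‖ ^ 2) with hr
  set Nm : Matrix (Fin n) (Fin n) ℂ := Matrix.of fun i k => (((r i)⁻¹ : ℝ) : ℂ) * M i k with hNm
  have hMN : M = Matrix.of fun i k => ((r i : ℝ) : ℂ) * Nm i k := by
    ext i k
    simp only [hNm, Matrix.of_apply, ← mul_assoc, ← Complex.ofReal_mul]
    rw [mul_inv_cancel₀ (hrpos i).ne', Complex.ofReal_one, one_mul]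
  have hNrows : ∀ i, ∑ k, ‖Nm i k‖ ^ 2 = 1 := by
    intro i
    have : ∀ k, ‖Nm i k‖ ^ 2 = ((r i)⁻¹) ^ 2 * ‖M i k‖ ^ 2 := by
      intro k
      simp only [hNm, Matrix.of_apply, norm_mul, Complex.norm_real, mul_pow]
      rw [Real.norm_eq_abs, abs_of_nonneg (inv_nonneg.mpr (hrpos i).le)]
    simp only [this, ← Finset.mul_sum]
    rw [show (∑ k, ‖M i k‖ ^ 2) = (r i) ^ 2 by
      rw [hr]; exact (Real.sq_sqrt (Finset.sum_nonneg fun k _ => sq_nonneg _)).symm]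
    rw [inv_pow, inv_mul_cancel₀ (pow_ne_zero 2 (hrpos i).ne')]
  have hdet : M.det = (∏ i, ((r i : ℝ) : ℂ)) * Nm.det := by
    conv_lhs => rw [hMN]
    exact Matrix.det_mul_column (fun i => ((r i : ℝ) : ℂ)) Nm
  rw [hdet, norm_mul]
  have h1 : ‖∏ i, ((r i : ℝ) : ℂ)‖ = ∏ i, r i := by
    rw [norm_prod]
    refine Finset.prod_congr rfl fun i _ => ?_
    rw [Complex.norm_real, Real.norm_eq_abs, abs_of_nonneg (hrpos i).le]
  rw [h1]
  calc (∏ i, r i) * ‖Nm.det‖ ≤ (∏ i, r i) * 1 :=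
        mul_le_mul_of_nonneg_left (aux_norm_det_le_one Nm hNrows)
          (Finset.prod_nonneg fun i _ => (hrpos i).le)
    _ = ∏ i, r i := mul_one _


open Polynomial in
lemma aux_det_expand {n : ℕ} (A B : Matrix (Fin n) (Fin n) ℂ) :
    (Matrix.det (Matrix.of fun i k => (C (A i k) + X * C (B i k)))) =
      ∑ s : Finset (Fin n), X ^ s.card *
        C (Matrix.det (Matrix.of fun i k => if i ∈ s then B i k else A i k)) := by
  classical
  set f := (Matrix.detRowAlternating :
      (Fin n → ℂ[X]) [⋀^Fin n]→ₗ[ℂ[X]] ℂ[X]).toMultilinearMap with hf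
  set bR : Fin n → Fin n → ℂ[X] := fun i k => X * C (B i k) with hbR
  set aR : Fin n → Fin n → ℂ[X] := fun i k => C (A i k) with haR
  have h0 : (Matrix.of fun i k => (C (A i k) + X * C (B i k)) :
      Matrix (Fin n) (Fin n) ℂ[X]) = (bR + aR : Fin n → Fin n → ℂ[X]) := by
    funext i k
    simp [hbR, haR, add_comm]
  have hdet : ∀ M : Matrix (Fin n) (Fin n) ℂ[X], M.det = f M := fun M => rfl
  rw [hdet, h0, f.map_add_univ bR aR]
  refine Finset.sum_congr rfl fun s _ => ?_
  set g : Fin n → Fin n → ℂ[X] := s.piecewise (fun i k => C (B i k)) aR with hg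
  have hpw : s.piecewise bR aR = s.piecewise (fun i => (X : ℂ[X]) • g i) g := by
    funext i
    by_cases hi : i ∈ s
    · rw [Finset.piecewise_eq_of_mem _ _ _ hi, Finset.piecewise_eq_of_mem _ _ _ hi]
      funext k
      simp only [hbR, hg, Pi.smul_apply, smul_eq_mul, Finset.piecewise_eq_of_mem _ _ _ hi]
    · rw [Finset.piecewise_eq_of_notMem _ _ _ hi, Finset.piecewise_eq_of_notMem _ _ _ hi]
      exact (Finset.piecewise_eq_of_notMem _ _ _ hi).symm
  rw [hpw, f.map_piecewise_smul (fun _ => X) g s, Finset.prod_const, smul_eq_mul]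
  congr 1
  have hmat : (g : Matrix (Fin n) (Fin n) ℂ[X]) =
      (Matrix.of fun i k => if i ∈ s then B i k else A i k).map (C : ℂ →+* ℂ[X]) := by
    funext i k
    by_cases hi : i ∈ s <;> simp [hg, Finset.piecewise, hi, haR, Matrix.map_apply]
  have : f g = ((Matrix.of fun i k => if i ∈ s then B i k else A i k).map
      (C : ℂ →+* ℂ[X])).det := by
    exact (hdet g).symm.trans (congrArg Matrix.det hmat)
  rw [this, RingHom.map_det, RingHom.mapMatrix_apply]

set_option maxHeartbeats 1000000 in
open Polynomial in
/-- Generalized Hadamard bound for coefficients of det(A + s B). -/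
theorem det_add_smul_coeff_bound (N N' j : ℕ) (A B : Matrix (Fin N) (Fin N) ℂ)
    (v w : ℝ) (hv : 0 ≤ v) (hw : 0 ≤ w)
    (hB : {i : Fin N | B i ≠ 0}.ncard ≤ N')
    (hA : ∀ i, Real.sqrt (∑ k, ‖A i k‖ ^ 2) ≤ v)
    (hBrow : ∀ i, Real.sqrt (∑ k, ‖B i k‖ ^ 2) ≤ w) :
    ‖(Matrix.det (Matrix.of fun i k => (C (A i k) + X * C (B i k)))).coeff j‖ ≤
      (N'.choose j : ℝ) * v ^ (N - j) * (v + w) ^ j := by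
  classical
  set D : Finset (Fin N) → Matrix (Fin N) (Fin N) ℂ :=
    fun s => Matrix.of fun i k => if i ∈ s then B i k else A i k with hD
  set T : Finset (Fin N) := Finset.univ.filter (fun i => B i ≠ 0) with hT
  have hTcard : T.card ≤ N' := by
    have hset : {i : Fin N | B i ≠ 0} = ↑T := by
      ext i; simp [hT]
    rwa [hset, Set.ncard_coe_finset] at hB
  set P : Finset (Finset (Fin N)) := Finset.powersetCard j T with hP
  rw [aux_det_expand A B, Polynomial.finset_sum_coeff]
  have hcoeff : ∀ s : Finset (Fin N),
      (X ^ s.card * C ((D s).det)).coeff j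
        = if s.card = j then (D s).det else 0 := by
    intro s
    rw [mul_comm, Polynomial.coeff_C_mul_X_pow]
    by_cases hc : s.card = j
    · rw [if_pos hc, if_pos hc.symm]
    · rw [if_neg hc, if_neg (fun h => hc h.symm)]
  have hterm : ∀ s : Finset (Fin N),
      ‖if s.card = j then (D s).det else 0‖ ≤
        if s ∈ P then v ^ (N - j) * w ^ j else 0 := by
    intro s
    by_cases hs : s ∈ P
    · obtain ⟨hsub, hcard⟩ := Finset.mem_powersetCard.mp hs
      rw [if_pos hs, if_pos hcard]
      calc ‖(D s).det‖ ≤ ∏ i, Real.sqrt (∑ k, ‖D s i k‖ ^ 2) := aux_hadamard (D s)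
        _ ≤ ∏ i, (if i ∈ s then w else v) := by
            refine Finset.prod_le_prod (fun i _ => Real.sqrt_nonneg _) (fun i _ => ?_)
            by_cases hi : i ∈ s
            · simp only [hD, Matrix.of_apply, hi, if_true]
              exact hBrow i
            · simp only [hD, Matrix.of_apply, hi, if_false]
              exact hA i
        _ = w ^ s.card * v ^ (N - s.card) := by
            rw [show (fun i : Fin N => if i ∈ s then w else v)
                = s.piecewise (fun _ => w) (fun _ => v) from rfl]
            rw [Finset.prod_piecewise, Finset.univ_inter, Finset.prod_const,
              Finset.prod_const, Finset.card_sdiff_of_subset (Finset.subset_univ s),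
              Finset.card_univ, Fintype.card_fin]
        _ = v ^ (N - j) * w ^ j := by rw [hcard, mul_comm]
    · rw [if_neg hs]
      by_cases hc : s.card = j
      · rw [if_pos hc]
        have hnsub : ¬ s ⊆ T := fun hsub => hs (Finset.mem_powersetCard.mpr ⟨hsub, hc⟩)
        obtain ⟨i, his, hiT⟩ := Finset.not_subset.mp hnsub
        have hBi : B i = 0 := by
          by_contra hne
          exact hiT (Finset.mem_filter.mpr ⟨Finset.mem_univ i, hne⟩)
        have : (D s).det = 0 := by
          refine Matrix.det_eq_zero_of_row_eq_zero i (fun k => ?_)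
          simp only [hD, Matrix.of_apply, his, if_true]
          exact congrFun hBi k
        rw [this, norm_zero]
      · rw [if_neg hc, norm_zero]
  calc ‖∑ s : Finset (Fin N), (X ^ s.card * C ((D s).det)).coeff j‖
      ≤ ∑ s : Finset (Fin N), ‖(X ^ s.card * C ((D s).det)).coeff j‖ :=
        norm_sum_le Finset.univ (fun s : Finset (Fin N) => (X ^ s.card * C ((D s).det)).coeff j)
    _ ≤ ∑ s : Finset (Fin N), (if s ∈ P then v ^ (N - j) * w ^ j else 0) := by
        refine Finset.sum_le_sum (fun s _ => ?_)
        rw [hcoeff s]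
        exact hterm s
    _ = (P.card : ℝ) * (v ^ (N - j) * w ^ j) := by
        rw [Finset.sum_ite_mem, Finset.univ_inter, Finset.sum_const, nsmul_eq_mul]
    _ ≤ (N'.choose j : ℝ) * (v ^ (N - j) * (v + w) ^ j) := by
        have h3 : (P.card : ℝ) ≤ (N'.choose j : ℝ) := by
          rw [hP, Finset.card_powersetCard]
          exact_mod_cast Nat.choose_le_choose j hTcard
        have h4 : v ^ (N - j) * w ^ j ≤ v ^ (N - j) * (v + w) ^ j :=
          mul_le_mul_of_nonneg_left
            (pow_le_pow_left₀ hw (by linarith) j) (pow_nonneg hv _)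
        exact mul_le_mul h3 h4 (by positivity) (by positivity)
    _ = (N'.choose j : ℝ) * v ^ (N - j) * (v + w) ^ j := by ring
end

section
/- Hadamard's inequality: for a complex N×N matrix A whose rows each have Euclidean norm at most v, one has |det A| ≤ v^N. -/
open scoped InnerProductSpace

/-- Hadamard's inequality. -/
theorem hadamard_det_bound (N : ℕ) (A : Matrix (Fin N) (Fin N) ℂ) (v : ℝ)
    (hrows : ∀ i, Real.sqrt (∑ j, ‖A i j‖ ^ 2) ≤ v) :
    ‖A.det‖ ≤ v ^ N := by
  rcases Nat.eq_zero_or_pos N with rfl | hN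
  · simp [Matrix.det_fin_zero]
  have hv : 0 ≤ v := le_trans (Real.sqrt_nonneg _) (hrows ⟨0, hN⟩)
  let f : Fin N → EuclideanSpace ℂ (Fin N) := fun i =>
    (WithLp.equiv 2 (Fin N → ℂ)).symm (A i)
  have hcard : Module.finrank ℂ (EuclideanSpace ℂ (Fin N)) = Fintype.card (Fin N) := by
    simp
  have instW : WellFoundedLT (Fin N) := inferInstance
  let b : OrthonormalBasis (Fin N) ℂ (EuclideanSpace ℂ (Fin N)) :=
    @InnerProductSpace.gramSchmidtOrthonormalBasis ℂ _ _ _ _ (Fin N) _ _ instW _ _ hcard f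
  let e := EuclideanSpace.basisFun (Fin N) ℂ
  have hnormf : ∀ i, ‖f i‖ ≤ v := by
    intro i
    rw [EuclideanSpace.norm_eq]
    exact hrows i
  -- det A equals e.toBasis.det f
  have h1 : e.toBasis.det f = A.det := by
    rw [Module.Basis.det_apply]
    have : e.toBasis.toMatrix f = A.transpose := by
      ext j i
      simp [Module.Basis.toMatrix, e, f, Matrix.transpose_apply, EuclideanSpace.basisFun_repr]
    rw [this, Matrix.det_transpose]
  have h2 : e.toBasis.det f = e.toBasis.det b.toBasis * b.toBasis.det f := by
    rw [Module.Basis.det_apply, Module.Basis.det_apply, Module.Basis.det_apply,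
      ← Module.Basis.toMatrix_mul_toMatrix e.toBasis b.toBasis f, Matrix.det_mul]
  have h3 : b.toBasis.det f = ∏ i, ⟪b i, f i⟫_ℂ :=
    InnerProductSpace.gramSchmidtOrthonormalBasis_det hcard f
  have h4 : ‖e.toBasis.det b.toBasis‖ = 1 := by
    have := e.det_to_matrix_orthonormalBasis b
    rwa [← b.coe_toBasis] at this
  calc ‖A.det‖ = ‖e.toBasis.det b.toBasis‖ * ‖∏ i, ⟪b i, f i⟫_ℂ‖ := by
        rw [← norm_mul, ← h3, ← h2, h1]
    _ = ∏ i, ‖⟪b i, f i⟫_ℂ‖ := by rw [h4, one_mul, norm_prod]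
    _ ≤ ∏ _i : Fin N, v := by
        apply Finset.prod_le_prod (fun i _ => norm_nonneg _)
        intro i _
        calc ‖⟪b i, f i⟫_ℂ‖ ≤ ‖b i‖ * ‖f i‖ := norm_inner_le_norm _ _
          _ = ‖f i‖ := by rw [b.orthonormal.1 i, one_mul]
          _ ≤ v := hnormf i
    _ = v ^ N := by simp
end
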